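/- Let $A, B, X \in \mathbb{M}_n$ be such that the block matrix $M = \begin{bmatrix} A & X \\ X^* & B \end{bmatrix} \in \mathbb{M}_{2n}$ is positive semi-definite. Then $\| M \|_{\infty} \le \| A + B \|_{\infty} + 2 w(X)$, where $\|\cdot\|_{\infty}$ is the operator norm and $w(X)$ is the numerical radius of $X$. -/

import Mathlib

open Matrix
open scoped ComplexOrder

/-- The absolute value `|Z| = (Zᴴ Z)^(1/2)` of a square complex matrix. -/
noncomputable def matAbs {m : Type*} [Fintype m] [DecidableEq m]
    (Z : Matrix m m ℂ) : Matrix m m ℂ :=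
  (Matrix.posSemidef_conjTranspose_mul_self Z).1.eigenvectorUnitary.1 *
    Matrix.diagonal ((↑) ∘ Real.sqrt ∘ (Matrix.posSemidef_conjTranspose_mul_self Z).1.eigenvalues) *
    (star (Matrix.posSemidef_conjTranspose_mul_self Z).1.eigenvectorUnitary : Matrix m m ℂ)

/-- Functional calculus: apply `f : ℝ → ℝ` to the eigenvalues of a Hermitian matrix
(junk value `0` if the matrix is not Hermitian). -/
noncomputable def hermApply {m : Type*} [Fintype m] [DecidableEq m]
    (f : ℝ → ℝ) (S : Matrix m m ℂ) : Matrix m m ℂ :=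
  if hS : S.IsHermitian then
    (hS.eigenvectorUnitary : Matrix m m ℂ) *
      Matrix.diagonal (fun i => (f (hS.eigenvalues i) : ℂ)) *
      (star (hS.eigenvectorUnitary : Matrix m m ℂ))
  else 0

/-- Real power of a positive semi-definite matrix by functional calculus. -/
noncomputable def matPow {m : Type*} [Fintype m] [DecidableEq m]
    (S : Matrix m m ℂ) (p : ℝ) : Matrix m m ℂ :=
  hermApply (fun x => x ^ p) S

/-- A symmetric (unitarily invariant) norm on complex `m × m` matrices. -/
structure IsSymmetricNorm {m : Type*} [Fintype m] [DecidableEq m]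
    (N : Matrix m m ℂ → ℝ) : Prop where
  add_le : ∀ A B, N (A + B) ≤ N A + N B
  smul : ∀ (c : ℂ) (A), N (c • A) = ‖c‖ * N A
  eq_zero_of : ∀ A, N A = 0 → A = 0
  unitary_mul_left : ∀ (U : Matrix.unitaryGroup m ℂ) (A), N (U * A) = N A
  mul_unitary_right : ∀ (U : Matrix.unitaryGroup m ℂ) (A), N (A * U) = N A

/-- Eigenvalues of a Hermitian matrix (junk value `0` if not Hermitian). -/
noncomputable def eigVals {m : Type*} [Fintype m] [DecidableEq m]
    (Z : Matrix m m ℂ) : m → ℝ :=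
  if hZ : Z.IsHermitian then hZ.eigenvalues else 0

/-- Eigenvalues of a Hermitian `n × n` matrix listed in decreasing order. -/
noncomputable def eigDown {n : ℕ} (Z : Matrix (Fin n) (Fin n) ℂ) : Fin n → ℝ :=
  fun i => (eigVals Z ∘ Tuple.sort (eigVals Z)) i.rev

/-- `Z ^ ↓`: the diagonal matrix listing the eigenvalues of `Z` in decreasing order. -/
noncomputable def downMat {n : ℕ} (Z : Matrix (Fin n) (Fin n) ℂ) : Matrix (Fin n) (Fin n) ℂ :=
  Matrix.diagonal (fun i => (eigDown Z i : ℂ))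

/-- Schatten `p`-norm. -/
noncomputable def schattenNorm {m : Type*} [Fintype m] [DecidableEq m]
    (p : ℝ) (Z : Matrix m m ℂ) : ℝ :=
  (∑ i, eigVals (matAbs Z) i ^ p) ^ (1 / p)

/-- Operator norm (largest singular value). -/
noncomputable def opNormInf {m : Type*} [Fintype m] [DecidableEq m]
    (Z : Matrix m m ℂ) : ℝ :=
  ⨆ i, Real.sqrt (eigVals (Zᴴ * Z) i)

/-- Numerical range. -/
def numRange {m : Type*} [Fintype m] (X : Matrix m m ℂ) : Set ℂ :=
  {z | ∃ x : m → ℂ, ∑ i, ‖x i‖ ^ 2 = 1 ∧ dotProduct (star x) (X *ᵥ x) = z}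

/-- Numerical radius. -/
noncomputable def numRadius {m : Type*} [Fintype m] (X : Matrix m m ℂ) : ℝ :=
  sSup ((fun z : ℂ => ‖z‖) '' numRange X)
namespace TwoNRAux


open Matrix Complex
open scoped ComplexOrder

variable {m : Type*} [Fintype m]

/-- squared euclidean norm of a vector -/
noncomputable def nsq (x : m → ℂ) : ℝ := ∑ i, ‖x i‖ ^ 2

lemma nsq_nonneg (x : m → ℂ) : 0 ≤ nsq x :=
  Finset.sum_nonneg fun i _ => by positivity

lemma star_dot_self (x : m → ℂ) : star x ⬝ᵥ x = (nsq x : ℂ) := by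
  simp only [dotProduct, nsq, Pi.star_apply, Complex.star_def]
  push_cast
  refine Finset.sum_congr rfl fun i _ => ?_
  rw [← Complex.normSq_eq_conj_mul_self, Complex.normSq_eq_norm_sq]
  norm_cast

lemma cs (u v : m → ℂ) :
    ‖star u ⬝ᵥ v‖ ≤ Real.sqrt (nsq u) * Real.sqrt (nsq v) := by
  have h := norm_inner_le_norm (𝕜 := ℂ) (WithLp.toLp 2 u) (WithLp.toLp 2 v)
  rw [EuclideanSpace.inner_eq_star_dotProduct, dotProduct_comm] at h
  simpa [EuclideanSpace.norm_eq, nsq] using h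

/-- real quadratic form -/
noncomputable def qf (S : Matrix m m ℂ) (x : m → ℂ) : ℝ := (star x ⬝ᵥ (S *ᵥ x)).re

lemma nsq_mulVec (Q : Matrix m m ℂ) (x : m → ℂ) : nsq (Q *ᵥ x) = qf (Qᴴ * Q) x := by
  rw [qf, ← mulVec_mulVec, dotProduct_mulVec, ← star_mulVec, star_dot_self]
  simp

lemma qf_nonneg {S : Matrix m m ℂ} (hS : S.PosSemidef) (x : m → ℂ) : 0 ≤ qf S x := by
  exact hS.re_dotProduct_nonneg x

open scoped MatrixOrder in
lemma genCS {M : Matrix m m ℂ} (hM : M.PosSemidef) (u v : m → ℂ) :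
    ‖star u ⬝ᵥ (M *ᵥ v)‖ ^ 2 ≤ qf M u * qf M v := by
  classical
  obtain ⟨Q, hQ⟩ := CStarAlgebra.nonneg_iff_eq_star_mul_self.mp hM.nonneg
  rw [star_eq_conjTranspose] at hQ
  subst hQ
  have h1 : star u ⬝ᵥ ((Qᴴ * Q) *ᵥ v) = star (Q *ᵥ u) ⬝ᵥ (Q *ᵥ v) := by
    rw [← mulVec_mulVec, dotProduct_mulVec, ← star_mulVec]
  rw [h1, ← nsq_mulVec, ← nsq_mulVec]
  have h2 := cs (Q *ᵥ u) (Q *ᵥ v)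
  have h3 : (0:ℝ) ≤ ‖star (Q *ᵥ u) ⬝ᵥ (Q *ᵥ v)‖ := norm_nonneg _
  calc ‖star (Q *ᵥ u) ⬝ᵥ (Q *ᵥ v)‖ ^ 2
      ≤ (Real.sqrt (nsq (Q *ᵥ u)) * Real.sqrt (nsq (Q *ᵥ v))) ^ 2 := by
        exact pow_le_pow_left₀ h3 h2 2
    _ = nsq (Q *ᵥ u) * nsq (Q *ᵥ v) := by
        rw [mul_pow, Real.sq_sqrt (nsq_nonneg _), Real.sq_sqrt (nsq_nonneg _)]




variable {m : Type*} [Fintype m] [DecidableEq m]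

lemma qf_le_of_eigenvalues_le {S : Matrix m m ℂ} (hS : S.IsHermitian) {c : ℝ}
    (hc : ∀ i, hS.eigenvalues i ≤ c) (x : m → ℂ) :
    qf S x ≤ c * nsq x := by
  classical
  set U : Matrix m m ℂ := (hS.eigenvectorUnitary : Matrix m m ℂ) with hU
  have hUU : U * star U = 1 := Matrix.mem_unitaryGroup_iff.mp hS.eigenvectorUnitary.2
  set y := star U *ᵥ x with hy
  have hstar : star y = star x ᵥ* U := by
    rw [hy, star_mulVec, Matrix.star_eq_conjTranspose, conjTranspose_conjTranspose]
  have hqf : star x ⬝ᵥ (S *ᵥ x)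
      = star y ⬝ᵥ (Matrix.diagonal (RCLike.ofReal ∘ hS.eigenvalues) *ᵥ y) := by
    conv_lhs => rw [hS.spectral_theorem, Unitary.conjStarAlgAut_apply]
    rw [← hU, ← mulVec_mulVec, ← mulVec_mulVec, dotProduct_mulVec (star x), ← hstar, ← hy]
  have hnsq : nsq y = nsq x := by
    have h1 : star y ⬝ᵥ y = star x ⬝ᵥ x := by
      rw [hstar, hy, ← dotProduct_mulVec, mulVec_mulVec, hUU, one_mulVec]
    have h2 := congrArg Complex.re h1
    rwa [star_dot_self, star_dot_self, Complex.ofReal_re, Complex.ofReal_re] at h2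
  have hdiag : star y ⬝ᵥ (Matrix.diagonal (RCLike.ofReal ∘ hS.eigenvalues) *ᵥ y)
      = ((∑ i, hS.eigenvalues i * ‖y i‖ ^ 2 : ℝ) : ℂ) := by
    push_cast
    rw [dotProduct]
    refine Finset.sum_congr rfl fun i _ => ?_
    rw [Matrix.mulVec_diagonal]
    have h3 : (RCLike.ofReal (hS.eigenvalues i) : ℂ) = ((hS.eigenvalues i : ℝ) : ℂ) := rfl
    simp only [Function.comp_apply, h3, Pi.star_apply, Complex.star_def]
    rw [show (starRingEnd ℂ) (y i) * (((hS.eigenvalues i : ℝ) : ℂ) * y i)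
        = ((hS.eigenvalues i : ℝ) : ℂ) * ((starRingEnd ℂ) (y i) * y i) from by ring,
      ← Complex.normSq_eq_conj_mul_self, Complex.normSq_eq_norm_sq]
    norm_cast
  have : qf S x = ∑ i, hS.eigenvalues i * ‖y i‖ ^ 2 := by
    rw [qf, hqf, hdiag, Complex.ofReal_re]
  rw [this, ← hnsq, nsq, Finset.mul_sum]
  exact Finset.sum_le_sum fun i _ =>
    mul_le_mul_of_nonneg_right (hc i) (by positivity)




variable {m : Type*} [Fintype m] [DecidableEq m]

lemma opNormInf_nonneg (Z : Matrix m m ℂ) : 0 ≤ opNormInf Z :=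
  Real.iSup_nonneg fun _ => Real.sqrt_nonneg _

lemma eigVals_herm {Z : Matrix m m ℂ} (hZ : Z.IsHermitian) : eigVals Z = hZ.eigenvalues :=
  dif_pos hZ

lemma qf_le_opNormInf (P : Matrix m m ℂ) (x : m → ℂ) :
    qf P x ≤ opNormInf P * nsq x := by
  have hS : (Pᴴ * P).IsHermitian := Matrix.isHermitian_conjTranspose_mul_self P
  set r := opNormInf P with hr
  have hr0 : 0 ≤ r := opNormInf_nonneg P
  have key : ∀ i, hS.eigenvalues i ≤ r ^ 2 := by
    intro i
    have h0 : 0 ≤ hS.eigenvalues i :=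
      (Matrix.posSemidef_conjTranspose_mul_self P).eigenvalues_nonneg i
    have h1 : Real.sqrt (hS.eigenvalues i) ≤ r := by
      have h2 : Real.sqrt (eigVals (Pᴴ * P) i) ≤ r :=
        le_ciSup (f := fun j => Real.sqrt (eigVals (Pᴴ * P) j))
          (Set.Finite.bddAbove (Set.finite_range _)) i
      rwa [eigVals_herm hS] at h2
    calc hS.eigenvalues i = Real.sqrt (hS.eigenvalues i) ^ 2 := (Real.sq_sqrt h0).symm
      _ ≤ r ^ 2 := pow_le_pow_left₀ (Real.sqrt_nonneg _) h1 2
  have h2 : qf (Pᴴ * P) x ≤ r ^ 2 * nsq x :=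
    qf_le_of_eigenvalues_le hS key x
  have h3 : qf P x ≤ Real.sqrt (nsq x) * Real.sqrt (nsq (P *ᵥ x)) :=
    le_trans (Complex.re_le_norm _) (cs _ _)
  have h4 : Real.sqrt (nsq (P *ᵥ x)) ≤ r * Real.sqrt (nsq x) := by
    rw [nsq_mulVec]
    calc Real.sqrt (qf (Pᴴ * P) x) ≤ Real.sqrt (r ^ 2 * nsq x) := Real.sqrt_le_sqrt h2
      _ = r * Real.sqrt (nsq x) := by
          rw [Real.sqrt_mul (by positivity), Real.sqrt_sq hr0]
  calc qf P x ≤ Real.sqrt (nsq x) * (r * Real.sqrt (nsq x)) := by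
        refine h3.trans (mul_le_mul_of_nonneg_left h4 (Real.sqrt_nonneg _))
    _ = r * nsq x := by
        rw [← mul_assoc, mul_comm _ r, mul_assoc, Real.mul_self_sqrt (nsq_nonneg _)]

lemma opNormInf_le {M : Matrix m m ℂ} (hM : M.PosSemidef) {c : ℝ} (hc0 : 0 ≤ c)
    (hqf : ∀ x, qf M x ≤ c * nsq x) : opNormInf M ≤ c := by
  refine Real.iSup_le (fun i => ?_) hc0
  have hS : (Mᴴ * M).IsHermitian := Matrix.isHermitian_conjTranspose_mul_self M
  rw [eigVals_herm hS]
  set μ := hS.eigenvalues i with hμdef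
  have hμ0 : 0 ≤ μ := (Matrix.posSemidef_conjTranspose_mul_self M).eigenvalues_nonneg i
  set v : m → ℂ := ⇑(hS.eigenvectorBasis i) with hv
  have hvv : (Mᴴ * M) *ᵥ v = μ • v := hS.mulVec_eigenvectorBasis i
  have hμqf : μ = qf (Mᴴ * M) v := by
    have := hS.eigenvalues_eq i
    simpa [qf, ← hv] using this
  set u := M *ᵥ v with hu
  have hnu : nsq u = μ := by rw [hu, nsq_mulVec, hμqf]
  have h5 : star u ⬝ᵥ (M *ᵥ v) = (μ : ℂ) := by
    rw [← hu, star_dot_self, hnu]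
  have h6 := genCS hM u v
  rw [h5] at h6
  have habs : ‖((μ : ℝ) : ℂ)‖ = μ := by
    rw [Complex.norm_real, Real.norm_of_nonneg hμ0]
  rw [habs] at h6
  have hnv : nsq v = 1 := by
    have h7 : ‖hS.eigenvectorBasis i‖ = 1 := hS.eigenvectorBasis.orthonormal.1 i
    rw [EuclideanSpace.norm_eq] at h7
    have h8 : Real.sqrt (∑ j, ‖v j‖ ^ 2) = 1 := h7
    have h9 : Real.sqrt (nsq v) = 1 := by rw [nsq]; exact h8
    nlinarith [Real.sq_sqrt (nsq_nonneg v), h9]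
  have hqu : qf M u ≤ c * μ := by rw [← hnu]; exact hqf u
  have hqv : qf M v ≤ c := by simpa [hnv] using hqf v
  have h8 : μ ^ 2 ≤ c ^ 2 * μ := by
    have hq0 : 0 ≤ qf M v := qf_nonneg hM v
    have hq0' : 0 ≤ qf M u := qf_nonneg hM u
    nlinarith [h6]
  rcases eq_or_lt_of_le hμ0 with h | h
  · rw [← h]; simpa using hc0
  · have : μ ≤ c ^ 2 := by nlinarith
    calc Real.sqrt μ ≤ Real.sqrt (c ^ 2) := Real.sqrt_le_sqrt this
      _ = c := Real.sqrt_sq hc0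




variable {m : Type*} [Fintype m]

lemma numRadius_nonneg (X : Matrix m m ℂ) : 0 ≤ numRadius X :=
  Real.sSup_nonneg fun r hr => by
    obtain ⟨z, _, rfl⟩ := hr; exact norm_nonneg _

lemma numRange_bddAbove (X : Matrix m m ℂ) : BddAbove ((fun z : ℂ => ‖z‖) '' numRange X) := by
  refine ⟨∑ i, ∑ j, ‖X i j‖, ?_⟩
  rintro r ⟨z, ⟨x, hx1, rfl⟩, rfl⟩
  have hxi : ∀ i, ‖x i‖ ≤ 1 := by
    intro i
    have h1 : ‖x i‖ ^ 2 ≤ 1 := by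
      rw [← hx1]
      exact Finset.single_le_sum (f := fun j => ‖x j‖ ^ 2) (fun j _ => by positivity) (Finset.mem_univ i)
    nlinarith [norm_nonneg (x i)]
  calc ‖star x ⬝ᵥ (X *ᵥ x)‖
      ≤ ∑ i, ‖star x i * (X *ᵥ x) i‖ := norm_sum_le _ _
    _ ≤ ∑ i, ∑ j, ‖X i j‖ := by
        refine Finset.sum_le_sum fun i _ => ?_
        rw [norm_mul, Matrix.mulVec, dotProduct]
        calc ‖star x i‖ * ‖∑ j, X i j * x j‖
            ≤ ‖star x i‖ * ∑ j, ‖X i j * x j‖ :=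
              mul_le_mul_of_nonneg_left (norm_sum_le _ _) (norm_nonneg _)
          _ ≤ 1 * ∑ j, ‖X i j * x j‖ := by
              refine mul_le_mul_of_nonneg_right ?_ ?_
              · simpa [Pi.star_apply] using hxi i
              · exact Finset.sum_nonneg fun j _ => norm_nonneg _
          _ ≤ ∑ j, ‖X i j‖ := by
              rw [one_mul]
              refine Finset.sum_le_sum fun j _ => ?_
              rw [norm_mul]
              calc ‖X i j‖ * ‖x j‖
                  ≤ ‖X i j‖ * 1 :=
                    mul_le_mul_of_nonneg_left (hxi j) (norm_nonneg _)
                _ = ‖X i j‖ := mul_one _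

lemma nr_bound (X : Matrix m m ℂ) (u : m → ℂ) :
    ‖star u ⬝ᵥ (X *ᵥ u)‖ ≤ numRadius X * nsq u := by
  rcases eq_or_ne (nsq u) 0 with h0 | h0
  · have hu : u = 0 := by
      funext i
      have h1 : ∀ i ∈ Finset.univ, (0:ℝ) ≤ ‖u i‖ ^ 2 := fun i _ => by positivity
      have h2 := (Finset.sum_eq_zero_iff_of_nonneg h1).mp h0 i (Finset.mem_univ i)
      have : ‖u i‖ = 0 := by nlinarith [norm_nonneg (u i)]
      simpa using this
    simp [hu, nsq]
  · have hpos : 0 < nsq u := lt_of_le_of_ne (nsq_nonneg u) (Ne.symm h0)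
    set t := Real.sqrt (nsq u) with ht
    have ht0 : 0 < t := Real.sqrt_pos.mpr hpos
    have ht2 : t ^ 2 = nsq u := Real.sq_sqrt (nsq_nonneg u)
    set w : m → ℂ := ((t : ℂ))⁻¹ • u with hw
    have hwn : ∑ i, ‖w i‖ ^ 2 = 1 := by
      have : ∀ i, ‖w i‖ ^ 2 = (t⁻¹) ^ 2 * ‖u i‖ ^ 2 := by
        intro i
        rw [hw]
        simp only [Pi.smul_apply, smul_eq_mul, norm_mul, mul_pow, norm_inv,
          Complex.norm_real, Real.norm_eq_abs, _root_.abs_of_nonneg ht0.le]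
      rw [Finset.sum_congr rfl fun i _ => this i, ← Finset.mul_sum]
      show t⁻¹ ^ 2 * nsq u = 1
      rw [← ht2]
      field_simp
    have hmem : (star w ⬝ᵥ (X *ᵥ w)) ∈ numRange X := ⟨w, hwn, rfl⟩
    have hle : ‖star w ⬝ᵥ (X *ᵥ w)‖ ≤ numRadius X :=
      le_csSup (numRange_bddAbove X) (Set.mem_image_of_mem _ hmem)
    have hscale : star u ⬝ᵥ (X *ᵥ u) = ((t:ℂ) * (t:ℂ)) * (star w ⬝ᵥ (X *ᵥ w)) := by
      rw [hw]
      rw [star_smul, Matrix.mulVec_smul, smul_dotProduct, dotProduct_smul]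
      rw [smul_smul, smul_eq_mul]
      have hconj : star ((t:ℂ))⁻¹ = ((t:ℂ))⁻¹ := by
        simp [Complex.star_def, map_inv₀, Complex.conj_ofReal]
      rw [hconj]
      have htne : (t:ℂ) ≠ 0 := by
        simpa using (Complex.ofReal_ne_zero.mpr (ne_of_gt ht0))
      field_simp
    rw [hscale, norm_mul, norm_mul, Complex.norm_real, Real.norm_of_nonneg ht0.le]
    calc t * t * ‖star w ⬝ᵥ (X *ᵥ w)‖ ≤ t * t * numRadius X := by
          refine mul_le_mul_of_nonneg_left hle (by positivity)
      _ = numRadius X * nsq u := by rw [← ht2]; ring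




variable {m : Type*} [Fintype m]

lemma qf_expand (X : Matrix m m ℂ) (x y : m → ℂ) (c : ℂ) :
    star (x + c • y) ⬝ᵥ (X *ᵥ (x + c • y))
      = star x ⬝ᵥ (X *ᵥ x) + c * (star x ⬝ᵥ (X *ᵥ y))
        + star c * (star y ⬝ᵥ (X *ᵥ x)) + c * star c * (star y ⬝ᵥ (X *ᵥ y)) := by
  simp only [star_add, star_smul, Matrix.mulVec_add, Matrix.mulVec_smul,
    add_dotProduct, dotProduct_add, smul_dotProduct,
    dotProduct_smul, smul_eq_mul]
  ring

lemma polar (X : Matrix m m ℂ) (x y : m → ℂ) :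
    ‖star y ⬝ᵥ (X *ᵥ x)‖ ≤ numRadius X * (nsq x + nsq y) := by
  have e1 := qf_expand X x y 1
  have e2 := qf_expand X x y Complex.I
  have e3 := qf_expand X x y (-1)
  have e4 := qf_expand X x y (-Complex.I)
  have key : 4 * (star y ⬝ᵥ (X *ᵥ x))
      = (star (x + (1:ℂ) • y) ⬝ᵥ (X *ᵥ (x + (1:ℂ) • y)))
        + Complex.I * (star (x + Complex.I • y) ⬝ᵥ (X *ᵥ (x + Complex.I • y)))
        - (star (x + (-1:ℂ) • y) ⬝ᵥ (X *ᵥ (x + (-1:ℂ) • y)))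
        - Complex.I * (star (x + (-Complex.I) • y) ⬝ᵥ (X *ᵥ (x + (-Complex.I) • y))) := by
    rw [e1, e2, e3, e4]
    simp only [star_one, star_neg, Complex.star_def, Complex.conj_I, _root_.map_one]
    linear_combination (2 * (star y ⬝ᵥ (X *ᵥ x)) - 2 * (star x ⬝ᵥ (X *ᵥ y))) * Complex.I_mul_I
  have habs : 4 * ‖star y ⬝ᵥ (X *ᵥ x)‖
      ≤ ‖star (x + (1:ℂ) • y) ⬝ᵥ (X *ᵥ (x + (1:ℂ) • y))‖
        + ‖star (x + Complex.I • y) ⬝ᵥ (X *ᵥ (x + Complex.I • y))‖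
        + ‖star (x + (-1:ℂ) • y) ⬝ᵥ (X *ᵥ (x + (-1:ℂ) • y))‖
        + ‖star (x + (-Complex.I) • y) ⬝ᵥ (X *ᵥ (x + (-Complex.I) • y))‖ := by
    have h4 : (4:ℝ) * ‖star y ⬝ᵥ (X *ᵥ x)‖
        = ‖4 * (star y ⬝ᵥ (X *ᵥ x))‖ := by
      rw [norm_mul]
      norm_num
    rw [h4, key]
    calc ‖_ + _ - _ - _‖
        ≤ ‖_ + _ - _‖ + ‖_‖ := norm_sub_le _ _
      _ ≤ ‖_ + _‖ + ‖_‖ + ‖_‖ := by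
          gcongr; exact norm_sub_le _ _
      _ ≤ ‖_‖ + ‖_‖ + ‖_‖ + ‖_‖ := by
          gcongr ?_ + _ + _; exact norm_add_le _ _
      _ = _ := by
          rw [norm_mul, norm_mul, Complex.norm_I, one_mul, one_mul]
  have par : ∀ z w : ℂ, ‖z + w‖ ^ 2 + ‖z - w‖ ^ 2 = 2 * ‖z‖ ^ 2 + 2 * ‖w‖ ^ 2 := by
    intro z w
    simp only [Complex.sq_norm, Complex.normSq_apply,
      Complex.add_re, Complex.add_im, Complex.sub_re, Complex.sub_im]
    ring
  have hn1 : nsq (x + (1:ℂ) • y) + nsq (x + (-1:ℂ) • y) = 2 * nsq x + 2 * nsq y := by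
    simp only [nsq, Pi.add_apply, Pi.smul_apply, smul_eq_mul, one_mul, neg_one_mul]
    rw [← Finset.sum_add_distrib]
    have hterm : ∀ i, ‖x i + y i‖ ^ 2 + ‖x i + -y i‖ ^ 2 = 2 * ‖x i‖ ^ 2 + 2 * ‖y i‖ ^ 2 := by
      intro i
      have h := par (x i) (y i)
      rw [show x i + -y i = x i - y i from by ring]
      linarith
    rw [Finset.sum_congr rfl fun i _ => hterm i, Finset.sum_add_distrib, ← Finset.mul_sum,
      ← Finset.mul_sum]
  have hn2 : nsq (x + Complex.I • y) + nsq (x + (-Complex.I) • y)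
      = 2 * nsq x + 2 * nsq y := by
    simp only [nsq, Pi.add_apply, Pi.smul_apply, smul_eq_mul]
    rw [← Finset.sum_add_distrib]
    have : ∀ i, ‖x i + Complex.I * y i‖ ^ 2 + ‖x i + -Complex.I * y i‖ ^ 2
        = 2 * ‖x i‖ ^ 2 + 2 * ‖y i‖ ^ 2 := by
      intro i
      have h := par (x i) (Complex.I * y i)
      rw [show x i + -Complex.I * y i = x i - Complex.I * y i from by ring]
      rw [show ‖Complex.I * y i‖ = ‖y i‖ from by
        rw [norm_mul, Complex.norm_I, one_mul]] at h
      linarith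
    rw [Finset.sum_congr rfl fun i _ => this i, Finset.sum_add_distrib, ← Finset.mul_sum,
      ← Finset.mul_sum]
  have b1 := nr_bound X (x + (1:ℂ) • y)
  have b2 := nr_bound X (x + Complex.I • y)
  have b3 := nr_bound X (x + (-1:ℂ) • y)
  have b4 := nr_bound X (x + (-Complex.I) • y)
  have hnr := numRadius_nonneg X
  nlinarith [habs, b1, b2, b3, b4, hn1, hn2]



end TwoNRAux

theorem two_numradius_opnorm_bound {n : ℕ} (A B X : Matrix (Fin n) (Fin n) ℂ)
    (hM : (Matrix.fromBlocks A X Xᴴ B).PosSemidef) :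
    opNormInf (Matrix.fromBlocks A X Xᴴ B) ≤ opNormInf (A + B) + 2 * numRadius X := by
  classical
  open TwoNRAux in
  set M := Matrix.fromBlocks A X Xᴴ B with hMdef
  have hAps : A.PosSemidef := by
    have h := hM.submatrix Sum.inl
    have he : (M.submatrix Sum.inl Sum.inl) = A := by ext i j; rfl
    rwa [he] at h
  have hBps : B.PosSemidef := by
    have h := hM.submatrix Sum.inr
    have he : (M.submatrix Sum.inr Sum.inr) = B := by ext i j; rfl
    rwa [he] at h
  have hop0 : 0 ≤ opNormInf (A + B) := TwoNRAux.opNormInf_nonneg _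
  have hnr0 : 0 ≤ numRadius X := TwoNRAux.numRadius_nonneg X
  have hc0 : 0 ≤ opNormInf (A + B) + 2 * numRadius X := by linarith
  refine TwoNRAux.opNormInf_le hM hc0 ?_
  intro v
  set x := v ∘ Sum.inl with hx
  set y := v ∘ Sum.inr with hy
  have hv : v = Sum.elim x y := by funext i; cases i <;> rfl
  have hstarelim : star (Sum.elim x y) = Sum.elim (star x) (star y) := by
    funext i; cases i <;> rfl
  have hsplit : star v ⬝ᵥ (M *ᵥ v)
      = (star x ⬝ᵥ (A *ᵥ x) + star x ⬝ᵥ (X *ᵥ y))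
        + (star y ⬝ᵥ (Xᴴ *ᵥ x) + star y ⬝ᵥ (B *ᵥ y)) := by
    rw [hv, hstarelim, hMdef, Matrix.fromBlocks_mulVec, sumElim_dotProduct_sumElim,
      dotProduct_add, dotProduct_add, Sum.elim_comp_inl, Sum.elim_comp_inr]
  have hconj : star y ⬝ᵥ (Xᴴ *ᵥ x) = star (star x ⬝ᵥ (X *ᵥ y)) := by
    rw [star_dotProduct, star_mulVec, conjTranspose_conjTranspose, ← dotProduct_mulVec]
  have hqfM : TwoNRAux.qf M v
      = TwoNRAux.qf A x + TwoNRAux.qf B y + 2 * (star x ⬝ᵥ (X *ᵥ y)).re := by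
    rw [TwoNRAux.qf, hsplit, hconj]
    simp only [Complex.add_re, Complex.star_def, Complex.conj_re]
    rw [TwoNRAux.qf, TwoNRAux.qf]
    ring
  have hb1 : TwoNRAux.qf A x ≤ opNormInf (A + B) * TwoNRAux.nsq x := by
    have hsum : TwoNRAux.qf (A + B) x = TwoNRAux.qf A x + TwoNRAux.qf B x := by
      rw [TwoNRAux.qf, TwoNRAux.qf, TwoNRAux.qf, Matrix.add_mulVec, dotProduct_add,
        Complex.add_re]
    have h0 := TwoNRAux.qf_nonneg hBps x
    have h1 := TwoNRAux.qf_le_opNormInf (A + B) x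
    linarith
  have hb2 : TwoNRAux.qf B y ≤ opNormInf (A + B) * TwoNRAux.nsq y := by
    have hsum : TwoNRAux.qf (A + B) y = TwoNRAux.qf A y + TwoNRAux.qf B y := by
      rw [TwoNRAux.qf, TwoNRAux.qf, TwoNRAux.qf, Matrix.add_mulVec, dotProduct_add,
        Complex.add_re]
    have h0 := TwoNRAux.qf_nonneg hAps y
    have h1 := TwoNRAux.qf_le_opNormInf (A + B) y
    linarith
  have hb3 : (star x ⬝ᵥ (X *ᵥ y)).re ≤ numRadius X * (TwoNRAux.nsq y + TwoNRAux.nsq x) :=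
    le_trans (Complex.re_le_norm _) (TwoNRAux.polar X y x)
  have hnv : TwoNRAux.nsq v = TwoNRAux.nsq x + TwoNRAux.nsq y := by
    rw [hv]
    simp [TwoNRAux.nsq, Fintype.sum_sum_type]
  rw [hqfM, hnv]
  ring_nf
  nlinarith [hb1, hb2, hb3, TwoNRAux.nsq_nonneg x, TwoNRAux.nsq_nonneg y]
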